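/- Fix γ ∈ [0,1); assume every induced kernel P_{π¹,π²} is γ-contractive with stationary distribution d_{π¹,π²}, and let I₂ ≥ 0 satisfy ‖P_{π¹,π²} − P_{π¹,π²'}‖_∞ ≤ I₂·‖π² − π²'‖_∞ for all policies. Define the average reward η(π¹,π²) = ∑_s d_{π¹,π²}(s) · g_{π¹,π²}(s), where g_{π¹,π²}(s) = ∑_{a¹,a²} π¹(s,a¹)π²(s,a²)r(s,a¹,a²). Then for all policies π¹, π¹', π², π²': |η(π¹,π²) − η(π¹',π²')| ≤ (‖π¹ − π¹'‖_∞ + I₂·‖π² − π²'‖_∞)/(1 − γ) + ‖π¹ − π¹'‖_∞ + ‖π² − π²'‖_∞. -/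
import Mathlib


/-- A probability vector on a finite type: nonnegative entries summing to 1. -/
def IsProbVec {S : Type*} [Fintype S] (d : S → ℝ) : Prop :=
  (∀ s, 0 ≤ d s) ∧ ∑ s, d s = 1

/-- A policy: each row is a probability vector over actions. -/
def IsPolicy {S A : Type*} [Fintype A] (π : S → A → ℝ) : Prop :=
  ∀ s, (∀ a, 0 ≤ π s a) ∧ ∑ a, π s a = 1

/-- Maximum of a real-valued function over a nonempty finite type. -/
noncomputable def fmax {S : Type*} [Fintype S] [Nonempty S] (f : S → ℝ) : ℝ :=
  Finset.univ.sup' Finset.univ_nonempty f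

/-- Policy distance ‖π − π'‖_∞ = max_s ∑_a |π(s,a) − π'(s,a)|. -/
noncomputable def pdist {S A : Type*} [Fintype S] [Nonempty S] [Fintype A]
    (π π' : S → A → ℝ) : ℝ :=
  fmax (fun s => ∑ a, |π s a - π' s a|)

/-- Kernel distance ‖K − K'‖_∞ = max_s ∑_{s'} |K(s,s') − K'(s,s')|. -/
noncomputable def kdist {S : Type*} [Fintype S] [Nonempty S] (K K' : S → S → ℝ) : ℝ :=
  fmax (fun s => ∑ s', |K s s' - K' s s'|)

/-- The induced kernel P_{π₁,π₂}(s,s') = ∑_{a₁,a₂} π₁(s,a₁)·π₂(s,a₂)·P(s,a₁,a₂,s'). -/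
def kernel {S A₁ A₂ : Type*} [Fintype A₁] [Fintype A₂]
    (P : S → A₁ → A₂ → S → ℝ) (π₁ : S → A₁ → ℝ) (π₂ : S → A₂ → ℝ) : S → S → ℝ :=
  fun s s' => ∑ a₁, ∑ a₂, π₁ s a₁ * π₂ s a₂ * P s a₁ a₂ s'

/-- Row-vector–matrix multiplication: (d ⬝ K) s' = ∑ s, d s · K s s'. -/
def vmul {S : Type*} [Fintype S] (d : S → ℝ) (K : S → S → ℝ) : S → ℝ :=
  fun s' => ∑ s, d s * K s s'

/-- L1 norm of a vector: ‖x‖₁ = ∑ s, |x s|. -/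
def l1 {S : Type*} [Fintype S] (x : S → ℝ) : ℝ := ∑ s, |x s|

/-- γ-contractivity. -/
def Contractive {S : Type*} [Fintype S] (γ : ℝ) (K : S → S → ℝ) : Prop :=
  ∀ d d' : S → ℝ, IsProbVec d → IsProbVec d' →
    l1 (fun s => vmul d K s - vmul d' K s) ≤ γ * l1 (fun s => d s - d' s)

/-- Expected one-step reward g_{π₁,π₂}(s) = ∑_{a₁,a₂} π₁(s,a₁)π₂(s,a₂)r(s,a₁,a₂). -/
def gfun {S A₁ A₂ : Type*} [Fintype A₁] [Fintype A₂]
    (r : S → A₁ → A₂ → ℝ) (π₁ : S → A₁ → ℝ) (π₂ : S → A₂ → ℝ) : S → ℝ :=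
  fun s => ∑ a₁, ∑ a₂, π₁ s a₁ * π₂ s a₂ * r s a₁ a₂

/-- Average reward η(π₁,π₂) = ∑_s d_{π₁,π₂}(s)·g_{π₁,π₂}(s). -/
def eta {S A₁ A₂ : Type*} [Fintype S] [Fintype A₁] [Fintype A₂]
    (r : S → A₁ → A₂ → ℝ) (dstat : (S → A₁ → ℝ) → (S → A₂ → ℝ) → S → ℝ)
    (π₁ : S → A₁ → ℝ) (π₂ : S → A₂ → ℝ) : ℝ :=
  ∑ s, dstat π₁ π₂ s * gfun r π₁ π₂ s


section Helpers

private lemma le_fmax' {S : Type*} [Fintype S] [Nonempty S] (f : S → ℝ) (s : S) :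
    f s ≤ fmax f :=
  Finset.le_sup' f (Finset.mem_univ s)

private lemma fmax_le' {S : Type*} [Fintype S] [Nonempty S] {f : S → ℝ} {c : ℝ}
    (h : ∀ s, f s ≤ c) : fmax f ≤ c :=
  Finset.sup'_le _ _ fun s _ => h s

private lemma sum_abs_le_pdist {S A : Type*} [Fintype S] [Nonempty S] [Fintype A]
    (π π' : S → A → ℝ) (s : S) : ∑ a, |π s a - π' s a| ≤ pdist π π' := by
  unfold pdist fmax
  exact Finset.le_sup' (fun s => ∑ a, |π s a - π' s a|) (Finset.mem_univ s)

private lemma sum_abs_le_kdist {S : Type*} [Fintype S] [Nonempty S]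
    (K K' : S → S → ℝ) (s : S) : ∑ s', |K s s' - K' s s'| ≤ kdist K K' := by
  unfold kdist fmax
  exact Finset.le_sup' (fun s => ∑ s', |K s s' - K' s s'|) (Finset.mem_univ s)

private lemma kdist_le' {S : Type*} [Fintype S] [Nonempty S] {K K' : S → S → ℝ} {c : ℝ}
    (h : ∀ s, ∑ s', |K s s' - K' s s'| ≤ c) : kdist K K' ≤ c := by
  unfold kdist fmax
  exact Finset.sup'_le _ _ fun s _ => h s

private lemma pdist_nonneg' {S A : Type*} [Fintype S] [Nonempty S] [Fintype A]
    (π π' : S → A → ℝ) : 0 ≤ pdist π π' := by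
  obtain ⟨s⟩ := (inferInstance : Nonempty S)
  exact le_trans (Finset.sum_nonneg fun a _ => abs_nonneg _) (sum_abs_le_pdist π π' s)

private lemma kdist_triangle' {S : Type*} [Fintype S] [Nonempty S] (K K' K'' : S → S → ℝ) :
    kdist K K'' ≤ kdist K K' + kdist K' K'' := by
  apply kdist_le'
  intro s
  calc ∑ s', |K s s' - K'' s s'|
      ≤ ∑ s', (|K s s' - K' s s'| + |K' s s' - K'' s s'|) := by
        apply Finset.sum_le_sum; intro s' _
        calc |K s s' - K'' s s'| = |(K s s' - K' s s') + (K' s s' - K'' s s')| := by ring_nf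
          _ ≤ |K s s' - K' s s'| + |K' s s' - K'' s s'| := abs_add_le _ _
    _ = (∑ s', |K s s' - K' s s'|) + ∑ s', |K' s s' - K'' s s'| := Finset.sum_add_distrib
    _ ≤ kdist K K' + kdist K' K'' := add_le_add (sum_abs_le_kdist _ _ s) (sum_abs_le_kdist _ _ s)

/-- Lipschitz continuity of the induced kernel in the first policy. -/
private lemma kdist_kernel_pi1 {S A₁ A₂ : Type*} [Fintype S] [Nonempty S]
    [Fintype A₁] [Fintype A₂]
    (P : S → A₁ → A₂ → S → ℝ) (hP : ∀ s a₁ a₂, IsProbVec (P s a₁ a₂))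
    (π₁ π₁' : S → A₁ → ℝ) (π₂ : S → A₂ → ℝ) (hπ₂ : IsPolicy π₂) :
    kdist (kernel P π₁ π₂) (kernel P π₁' π₂) ≤ pdist π₁ π₁' := by
  apply kdist_le'
  intro s
  calc ∑ s', |kernel P π₁ π₂ s s' - kernel P π₁' π₂ s s'|
      ≤ ∑ s', ∑ a₁, ∑ a₂, |π₁ s a₁ - π₁' s a₁| * (π₂ s a₂ * P s a₁ a₂ s') := by
        apply Finset.sum_le_sum; intro s' _
        have hkey : kernel P π₁ π₂ s s' - kernel P π₁' π₂ s s' =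
            ∑ a₁, ∑ a₂, (π₁ s a₁ - π₁' s a₁) * (π₂ s a₂ * P s a₁ a₂ s') := by
          simp only [kernel, ← Finset.sum_sub_distrib]
          apply Finset.sum_congr rfl; intro a₁ _
          apply Finset.sum_congr rfl; intro a₂ _
          ring
        rw [hkey]
        refine (Finset.abs_sum_le_sum_abs _ _).trans (Finset.sum_le_sum fun a₁ _ => ?_)
        refine (Finset.abs_sum_le_sum_abs _ _).trans (Finset.sum_le_sum fun a₂ _ => ?_)
        rw [abs_mul, abs_of_nonneg (mul_nonneg ((hπ₂ s).1 a₂) ((hP s a₁ a₂).1 s'))]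
    _ = ∑ a₁, ∑ a₂, ∑ s', |π₁ s a₁ - π₁' s a₁| * (π₂ s a₂ * P s a₁ a₂ s') := by
        rw [Finset.sum_comm]
        exact Finset.sum_congr rfl fun a₁ _ => Finset.sum_comm
    _ = ∑ a₁, |π₁ s a₁ - π₁' s a₁| := by
        apply Finset.sum_congr rfl; intro a₁ _
        have : ∀ a₂ ∈ Finset.univ, ∑ s', |π₁ s a₁ - π₁' s a₁| * (π₂ s a₂ * P s a₁ a₂ s')
            = |π₁ s a₁ - π₁' s a₁| * π₂ s a₂ := by
          intro a₂ _
          rw [← Finset.mul_sum, ← Finset.mul_sum, (hP s a₁ a₂).2, mul_one]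
        rw [Finset.sum_congr rfl this, ← Finset.mul_sum, (hπ₂ s).2, mul_one]
    _ ≤ pdist π₁ π₁' := sum_abs_le_pdist _ _ s

private lemma l1_vmul_le_kdist {S : Type*} [Fintype S] [Nonempty S]
    (d : S → ℝ) (K K' : S → S → ℝ) (hd : IsProbVec d) :
    l1 (fun s' => vmul d K s' - vmul d K' s') ≤ kdist K K' := by
  calc l1 (fun s' => vmul d K s' - vmul d K' s')
      = ∑ s', |∑ s, d s * (K s s' - K' s s')| := by
        simp only [l1, vmul, ← Finset.sum_sub_distrib, mul_sub]
    _ ≤ ∑ s', ∑ s, d s * |K s s' - K' s s'| := by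
        apply Finset.sum_le_sum; intro s' _
        refine (Finset.abs_sum_le_sum_abs _ _).trans (Finset.sum_le_sum fun s _ => ?_)
        rw [abs_mul, abs_of_nonneg (hd.1 s)]
    _ = ∑ s, d s * ∑ s', |K s s' - K' s s'| := by
        rw [Finset.sum_comm]
        exact Finset.sum_congr rfl fun s _ => (Finset.mul_sum _ _ _).symm
    _ ≤ ∑ s, d s * kdist K K' := by
        exact Finset.sum_le_sum fun s _ =>
          mul_le_mul_of_nonneg_left (sum_abs_le_kdist _ _ s) (hd.1 s)
    _ = kdist K K' := by rw [← Finset.sum_mul, hd.2, one_mul]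

private lemma l1_triangle' {S : Type*} [Fintype S] (f g h : S → ℝ) :
    l1 (fun s => f s - h s) ≤ l1 (fun s => f s - g s) + l1 (fun s => g s - h s) := by
  simp only [l1, ← Finset.sum_add_distrib]
  apply Finset.sum_le_sum; intro s _
  calc |f s - h s| = |(f s - g s) + (g s - h s)| := by ring_nf
    _ ≤ |f s - g s| + |g s - h s| := abs_add_le _ _

private lemma gfun_le_one {S A₁ A₂ : Type*} [Fintype A₁] [Fintype A₂]
    (r : S → A₁ → A₂ → ℝ) (hr : ∀ s a₁ a₂, 0 ≤ r s a₁ a₂ ∧ r s a₁ a₂ ≤ 1)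
    (π₁ : S → A₁ → ℝ) (π₂ : S → A₂ → ℝ) (hπ₁ : IsPolicy π₁) (hπ₂ : IsPolicy π₂)
    (s : S) : |gfun r π₁ π₂ s| ≤ 1 := by
  unfold gfun
  rw [abs_of_nonneg (Finset.sum_nonneg fun a₁ _ => Finset.sum_nonneg fun a₂ _ =>
    mul_nonneg (mul_nonneg ((hπ₁ s).1 a₁) ((hπ₂ s).1 a₂)) (hr s a₁ a₂).1)]
  calc gfun r π₁ π₂ s ≤ ∑ a₁, ∑ a₂, π₁ s a₁ * π₂ s a₂ := by
        apply Finset.sum_le_sum; intro a₁ _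
        apply Finset.sum_le_sum; intro a₂ _
        exact mul_le_of_le_one_right
          (mul_nonneg ((hπ₁ s).1 a₁) ((hπ₂ s).1 a₂)) (hr s a₁ a₂).2
    _ = 1 := by
        have : ∀ a₁ ∈ Finset.univ, ∑ a₂, π₁ s a₁ * π₂ s a₂ = π₁ s a₁ := by
          intro a₁ _; rw [← Finset.mul_sum, (hπ₂ s).2, mul_one]
        rw [Finset.sum_congr rfl this, (hπ₁ s).2]

private lemma gfun_diff_le {S A₁ A₂ : Type*} [Fintype S] [Nonempty S]
    [Fintype A₁] [Fintype A₂]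
    (r : S → A₁ → A₂ → ℝ) (hr : ∀ s a₁ a₂, 0 ≤ r s a₁ a₂ ∧ r s a₁ a₂ ≤ 1)
    (π₁ π₁' : S → A₁ → ℝ) (π₂ π₂' : S → A₂ → ℝ)
    (hπ₁ : IsPolicy π₁) (hπ₁' : IsPolicy π₁') (hπ₂ : IsPolicy π₂) (hπ₂' : IsPolicy π₂')
    (s : S) :
    |gfun r π₁ π₂ s - gfun r π₁' π₂' s| ≤ pdist π₁ π₁' + pdist π₂ π₂' := by
  have hkey : gfun r π₁ π₂ s - gfun r π₁' π₂' s =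
      (∑ a₁, ∑ a₂, (π₁ s a₁ - π₁' s a₁) * π₂ s a₂ * r s a₁ a₂) +
      (∑ a₁, ∑ a₂, π₁' s a₁ * (π₂ s a₂ - π₂' s a₂) * r s a₁ a₂) := by
    simp only [gfun, ← Finset.sum_sub_distrib, ← Finset.sum_add_distrib]
    apply Finset.sum_congr rfl; intro a₁ _
    apply Finset.sum_congr rfl; intro a₂ _
    ring
  rw [hkey]
  refine (abs_add_le _ _).trans (add_le_add ?_ ?_)
  · calc |∑ a₁, ∑ a₂, (π₁ s a₁ - π₁' s a₁) * π₂ s a₂ * r s a₁ a₂|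
        ≤ ∑ a₁, ∑ a₂, |π₁ s a₁ - π₁' s a₁| * π₂ s a₂ := by
          refine (Finset.abs_sum_le_sum_abs _ _).trans (Finset.sum_le_sum fun a₁ _ => ?_)
          refine (Finset.abs_sum_le_sum_abs _ _).trans (Finset.sum_le_sum fun a₂ _ => ?_)
          rw [abs_mul, abs_mul, abs_of_nonneg ((hπ₂ s).1 a₂),
            abs_of_nonneg (hr s a₁ a₂).1]
          exact mul_le_of_le_one_right
            (mul_nonneg (abs_nonneg _) ((hπ₂ s).1 a₂)) (hr s a₁ a₂).2
      _ = ∑ a₁, |π₁ s a₁ - π₁' s a₁| := by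
          apply Finset.sum_congr rfl; intro a₁ _
          rw [← Finset.mul_sum, (hπ₂ s).2, mul_one]
      _ ≤ pdist π₁ π₁' := sum_abs_le_pdist _ _ s
  · calc |∑ a₁, ∑ a₂, π₁' s a₁ * (π₂ s a₂ - π₂' s a₂) * r s a₁ a₂|
        ≤ ∑ a₁, ∑ a₂, π₁' s a₁ * |π₂ s a₂ - π₂' s a₂| := by
          refine (Finset.abs_sum_le_sum_abs _ _).trans (Finset.sum_le_sum fun a₁ _ => ?_)
          refine (Finset.abs_sum_le_sum_abs _ _).trans (Finset.sum_le_sum fun a₂ _ => ?_)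
          rw [abs_mul, abs_mul, abs_of_nonneg ((hπ₁' s).1 a₁),
            abs_of_nonneg (hr s a₁ a₂).1]
          exact mul_le_of_le_one_right
            (mul_nonneg ((hπ₁' s).1 a₁) (abs_nonneg _)) (hr s a₁ a₂).2
      _ = ∑ a₁, π₁' s a₁ * ∑ a₂, |π₂ s a₂ - π₂' s a₂| := by
          exact Finset.sum_congr rfl fun a₁ _ => (Finset.mul_sum _ _ _).symm
      _ ≤ ∑ a₁, π₁' s a₁ * pdist π₂ π₂' := by
          exact Finset.sum_le_sum fun a₁ _ =>
            mul_le_mul_of_nonneg_left (sum_abs_le_pdist _ _ s) ((hπ₁' s).1 a₁)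
      _ = pdist π₂ π₂' := by rw [← Finset.sum_mul, (hπ₁' s).2, one_mul]

end Helpers

/-- Lipschitz continuity of the average reward in the policy pair,
|η(π₁,π₂) − η(π₁',π₂')| ≤ (‖π₁−π₁'‖_∞ + I₂‖π₂−π₂'‖_∞)/(1−γ) + ‖π₁−π₁'‖_∞ + ‖π₂−π₂'‖_∞. -/
theorem stmt_18 {S A₁ A₂ : Type*} [Fintype S] [Nonempty S]
    [Fintype A₁] [Nonempty A₁] [Fintype A₂] [Nonempty A₂]
    (P : S → A₁ → A₂ → S → ℝ) (hP : ∀ s a₁ a₂, IsProbVec (P s a₁ a₂))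
    (r : S → A₁ → A₂ → ℝ) (hr : ∀ s a₁ a₂, 0 ≤ r s a₁ a₂ ∧ r s a₁ a₂ ≤ 1)
    (γ : ℝ) (hγ0 : 0 ≤ γ) (hγ1 : γ < 1)
    (hcontr : ∀ (π₁ : S → A₁ → ℝ) (π₂ : S → A₂ → ℝ), IsPolicy π₁ → IsPolicy π₂ →
      Contractive γ (kernel P π₁ π₂))
    (dstat : (S → A₁ → ℝ) → (S → A₂ → ℝ) → S → ℝ)
    (hdstat : ∀ (π₁ : S → A₁ → ℝ) (π₂ : S → A₂ → ℝ), IsPolicy π₁ → IsPolicy π₂ →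
      IsProbVec (dstat π₁ π₂) ∧ vmul (dstat π₁ π₂) (kernel P π₁ π₂) = dstat π₁ π₂)
    (I₂ : ℝ) (hI₂0 : 0 ≤ I₂)
    (hinfl : ∀ (π₁ : S → A₁ → ℝ) (π₂ π₂' : S → A₂ → ℝ),
      IsPolicy π₁ → IsPolicy π₂ → IsPolicy π₂' →
      kdist (kernel P π₁ π₂) (kernel P π₁ π₂') ≤ I₂ * pdist π₂ π₂')
    (π₁ π₁' : S → A₁ → ℝ) (hπ₁ : IsPolicy π₁) (hπ₁' : IsPolicy π₁')
    (π₂ π₂' : S → A₂ → ℝ) (hπ₂ : IsPolicy π₂) (hπ₂' : IsPolicy π₂') :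
    |eta r dstat π₁ π₂ - eta r dstat π₁' π₂'| ≤
      (pdist π₁ π₁' + I₂ * pdist π₂ π₂') / (1 - γ) + pdist π₁ π₁' + pdist π₂ π₂' := by
  have hpos : (0:ℝ) < 1 - γ := by linarith
  set dA := dstat π₁ π₂ with hdA
  set dB := dstat π₁' π₂' with hdB
  set K := kernel P π₁ π₂ with hK
  set K' := kernel P π₁' π₂' with hK'
  obtain ⟨hdAprob, hdAfix⟩ := hdstat π₁ π₂ hπ₁ hπ₂
  obtain ⟨hdBprob, hdBfix⟩ := hdstat π₁' π₂' hπ₁' hπ₂'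
  -- bound on kernel distance
  have hkd : kdist K K' ≤ pdist π₁ π₁' + I₂ * pdist π₂ π₂' := by
    calc kdist K K' ≤ kdist K (kernel P π₁ π₂') + kdist (kernel P π₁ π₂') K' :=
          kdist_triangle' _ _ _
      _ ≤ I₂ * pdist π₂ π₂' + pdist π₁ π₁' :=
          add_le_add (hinfl π₁ π₂ π₂' hπ₁ hπ₂ hπ₂')
            (kdist_kernel_pi1 P hP π₁ π₁' π₂' hπ₂')
      _ = pdist π₁ π₁' + I₂ * pdist π₂ π₂' := by ring
  -- bound on stationary distribution distance
  have hl1 : l1 (fun s => dA s - dB s) ≤ (pdist π₁ π₁' + I₂ * pdist π₂ π₂') / (1 - γ) := by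
    have hstep : l1 (fun s => dA s - dB s) ≤
        γ * l1 (fun s => dA s - dB s) + kdist K K' := by
      have heq : (fun s => dA s - dB s) = fun s => vmul dA K s - vmul dB K' s := by
        funext s
        rw [show vmul dA K s = dA s from congrFun hdAfix s,
            show vmul dB K' s = dB s from congrFun hdBfix s]
      calc l1 (fun s => dA s - dB s)
          = l1 (fun s => vmul dA K s - vmul dB K' s) := by rw [← heq]
        _ ≤ l1 (fun s => vmul dA K s - vmul dB K s) +
            l1 (fun s => vmul dB K s - vmul dB K' s) := l1_triangle' _ _ _
        _ ≤ γ * l1 (fun s => dA s - dB s) + kdist K K' :=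
            add_le_add (hcontr π₁ π₂ hπ₁ hπ₂ dA dB hdAprob hdBprob)
              (l1_vmul_le_kdist dB K K' hdBprob)
    have h1 : (1 - γ) * l1 (fun s => dA s - dB s) ≤ kdist K K' := by linarith
    rw [le_div_iff₀ hpos]
    calc l1 (fun s => dA s - dB s) * (1 - γ)
        = (1 - γ) * l1 (fun s => dA s - dB s) := by ring
      _ ≤ kdist K K' := h1
      _ ≤ pdist π₁ π₁' + I₂ * pdist π₂ π₂' := hkd
  -- split eta difference
  have hsplit : eta r dstat π₁ π₂ - eta r dstat π₁' π₂' =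
      (∑ s, (dA s - dB s) * gfun r π₁ π₂ s) +
      (∑ s, dB s * (gfun r π₁ π₂ s - gfun r π₁' π₂' s)) := by
    rw [eta, eta, ← Finset.sum_sub_distrib, ← Finset.sum_add_distrib]
    apply Finset.sum_congr rfl; intro s _
    ring
  rw [hsplit]
  refine (abs_add_le _ _).trans ?_
  have hT1 : |∑ s, (dA s - dB s) * gfun r π₁ π₂ s| ≤
      (pdist π₁ π₁' + I₂ * pdist π₂ π₂') / (1 - γ) := by
    calc |∑ s, (dA s - dB s) * gfun r π₁ π₂ s|
        ≤ ∑ s, |dA s - dB s| * |gfun r π₁ π₂ s| := by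
          refine (Finset.abs_sum_le_sum_abs _ _).trans (Finset.sum_le_sum fun s _ => ?_)
          rw [abs_mul]
      _ ≤ ∑ s, |dA s - dB s| := by
          refine Finset.sum_le_sum fun s _ => ?_
          calc |dA s - dB s| * |gfun r π₁ π₂ s| ≤ |dA s - dB s| * 1 :=
                mul_le_mul_of_nonneg_left (gfun_le_one r hr π₁ π₂ hπ₁ hπ₂ s) (abs_nonneg _)
            _ = |dA s - dB s| := mul_one _
      _ = l1 (fun s => dA s - dB s) := rfl
      _ ≤ (pdist π₁ π₁' + I₂ * pdist π₂ π₂') / (1 - γ) := hl1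
  have hT2 : |∑ s, dB s * (gfun r π₁ π₂ s - gfun r π₁' π₂' s)| ≤
      pdist π₁ π₁' + pdist π₂ π₂' := by
    calc |∑ s, dB s * (gfun r π₁ π₂ s - gfun r π₁' π₂' s)|
        ≤ ∑ s, dB s * |gfun r π₁ π₂ s - gfun r π₁' π₂' s| := by
          refine (Finset.abs_sum_le_sum_abs _ _).trans (Finset.sum_le_sum fun s _ => ?_)
          rw [abs_mul, abs_of_nonneg (hdBprob.1 s)]
      _ ≤ ∑ s, dB s * (pdist π₁ π₁' + pdist π₂ π₂') := by
          exact Finset.sum_le_sum fun s _ => mul_le_mul_of_nonneg_left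
            (gfun_diff_le r hr π₁ π₁' π₂ π₂' hπ₁ hπ₁' hπ₂ hπ₂' s) (hdBprob.1 s)
      _ = pdist π₁ π₁' + pdist π₂ π₂' := by rw [← Finset.sum_mul, hdBprob.2, one_mul]
  linarith
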